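/- Off-policy Truncated Importance Sampling can produce a non-contraction: let p = 0.6 and γ = 0.94. For t ≥ 1 define β^{(1)}_t := Σ_{k=0}^{t−1} C(t−1,k) · min(2^{−(t−1)}, 2p · p^k (1−p)^{t−1−k}) and β^{(2)}_t := Σ_{k=0}^{t−1} C(t−1,k) · min(2^{−(t−1)}, 2(1−p) · (1−p)^k p^{t−1−k}), where C(t−1,k) is the binomial coefficient. Let P_π := [[p, 1−p],[p, 1−p]], B_0 := I, and B_t := (1/2)·[[β^{(1)}_t, β^{(2)}_t],[β^{(1)}_t, β^{(2)}_t]] for t ≥ 1. Then the series Z := Σ_{t=1}^∞ γ^t (B_{t−1} P_π − B_t) converges entrywise absolutely, and its maximum absolute row-sum norm satisfies ‖Z‖ > 1. -/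

import Mathlib

open scoped BigOperators

/-- The expected truncated-IS trace `β^{(1)}_{n+1}` of Counterexample 1 (as a function of
`n = t − 1`): `Σ_{k=0}^{n} C(n,k) · min(2^{−n}, 2p·p^k (1−p)^{n−k})`.  The companion trace
`β^{(2)}` is obtained by substituting `1 − p` for `p`. -/
noncomputable def tisBeta (p : ℝ) (n : ℕ) : ℝ :=
  ∑ k ∈ Finset.range (n + 1),
    (n.choose k : ℝ) * min ((2 : ℝ)⁻¹ ^ n) (2 * p * p ^ k * (1 - p) ^ (n - k))

/-- Policy matrix of Counterexample 1: `P_π = [[p, 1−p],[p, 1−p]]`. -/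
def Ppi16 (p : ℝ) : Matrix (Fin 2) (Fin 2) ℝ := !![p, 1 - p; p, 1 - p]

/-- Trace matrices of Counterexample 1: `B_0 = I` and
`B_t = (1/2)·[[β⁽¹⁾_t, β⁽²⁾_t],[β⁽¹⁾_t, β⁽²⁾_t]]` for `t ≥ 1`. -/
noncomputable def B16 (p : ℝ) : ℕ → Matrix (Fin 2) (Fin 2) ℝ
  | 0 => 1
  | n + 1 => (1 / 2 : ℝ) •
      !![tisBeta p n, tisBeta (1 - p) n; tisBeta p n, tisBeta (1 - p) n]

/-- `Z = Σ_{t=1}^∞ γ^t (B_{t−1} P_π − B_t)`, computed entrywise. -/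
noncomputable def Z16 (p γ : ℝ) : Matrix (Fin 2) (Fin 2) ℝ :=
  fun i j => ∑' t : ℕ, γ ^ (t + 1) * ((B16 p t * Ppi16 p - B16 p (t + 1)) i j)

/-- Maximum absolute row-sum (`ℓ∞`-induced) norm on 2×2 real matrices. -/
def rowNorm2 (M : Matrix (Fin 2) (Fin 2) ℝ) : ℝ :=
  max (|M 0 0| + |M 0 1|) (|M 1 0| + |M 1 1|)


private lemma h64 : (1:ℝ) - 0.6 = 0.4 := by norm_num
private lemma h46 : (1:ℝ) - 0.4 = 0.6 := by norm_num

private lemma mindiff16 {c x d : ℝ} (hd : 0 ≤ d) : min c (x + d) ≤ min c x + d := by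
  rcases le_total c x with h1 | h1
  · rw [min_eq_left h1, min_eq_left (by linarith)]; linarith
  · rw [min_eq_right h1]
    exact le_trans (min_le_right _ _) (by linarith)

private lemma tisBeta_reflect (p : ℝ) (n : ℕ) :
    tisBeta p n = ∑ k ∈ Finset.range (n+1),
      (n.choose k : ℝ) * min ((2:ℝ)⁻¹ ^ n) (2 * p * p ^ (n - k) * (1-p) ^ k) := by
  rw [tisBeta, ← Finset.sum_range_reflect]
  refine Finset.sum_congr rfl fun k hk => ?_
  have hk' : k ≤ n := Nat.lt_succ_iff.mp (Finset.mem_range.mp hk)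
  have e1 : n + 1 - 1 - k = n - k := by omega
  have e2 : n - (n - k) = k := by omega
  rw [e1, e2, Nat.choose_symm hk']

private lemma diff_nonneg16 (n : ℕ) : tisBeta 0.4 n ≤ tisBeta 0.6 n := by
  rw [tisBeta_reflect 0.4 n]
  unfold tisBeta
  simp only [h46, h64]
  refine Finset.sum_le_sum fun k hk => ?_
  refine mul_le_mul_of_nonneg_left ?_ (Nat.cast_nonneg _)
  refine min_le_min le_rfl ?_
  have h1 : (0:ℝ) ≤ 0.6 ^ k * 0.4 ^ (n-k) := by positivity
  nlinarith

private lemma diff_le16 (n : ℕ) : tisBeta 0.6 n ≤ tisBeta 0.4 n + 2/5 := by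
  rw [tisBeta_reflect 0.4 n]
  unfold tisBeta
  simp only [h46, h64]
  have hbin : ∑ k ∈ Finset.range (n+1), (0.6:ℝ)^k * 0.4^(n-k) * (n.choose k : ℝ) = 1 := by
    have h := add_pow (0.6:ℝ) 0.4 n
    have h1 : (0.6:ℝ) + 0.4 = 1 := by norm_num
    rw [h1, one_pow] at h
    exact h.symm
  calc ∑ k ∈ Finset.range (n+1), (n.choose k:ℝ) * min ((2:ℝ)⁻¹ ^ n) (2*0.6*0.6^k*0.4^(n-k))
      ≤ ∑ k ∈ Finset.range (n+1), ((n.choose k:ℝ) * min ((2:ℝ)⁻¹ ^ n) (2*0.4*0.4^(n-k)*0.6^k)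
          + (2/5) * ((0.6:ℝ)^k * 0.4^(n-k) * (n.choose k:ℝ))) := by
        refine Finset.sum_le_sum fun k hk => ?_
        have hd : (0:ℝ) ≤ (2/5) * (0.6^k * 0.4^(n-k)) := by positivity
        have h := mindiff16 (c := (2:ℝ)⁻¹ ^ n) (x := 2*0.4*0.4^(n-k)*0.6^k) hd
        have he : (2:ℝ)*0.4*0.4^(n-k)*0.6^k + (2/5) * (0.6^k * 0.4^(n-k)) = 2*0.6*0.6^k*0.4^(n-k) := by
          ring
        rw [he] at h
        calc (n.choose k:ℝ) * min ((2:ℝ)⁻¹ ^ n) (2*0.6*0.6^k*0.4^(n-k))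
            ≤ (n.choose k:ℝ) * (min ((2:ℝ)⁻¹ ^ n) (2*0.4*0.4^(n-k)*0.6^k) + (2/5) * (0.6^k * 0.4^(n-k))) :=
              mul_le_mul_of_nonneg_left h (Nat.cast_nonneg _)
          _ = (n.choose k:ℝ) * min ((2:ℝ)⁻¹ ^ n) (2*0.4*0.4^(n-k)*0.6^k)
              + (2/5) * ((0.6:ℝ)^k * 0.4^(n-k) * (n.choose k:ℝ)) := by ring
    _ = (∑ k ∈ Finset.range (n+1), (n.choose k:ℝ) * min ((2:ℝ)⁻¹ ^ n) (2*0.4*0.4^(n-k)*0.6^k))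
        + ∑ k ∈ Finset.range (n+1), (2/5) * ((0.6:ℝ)^k * 0.4^(n-k) * (n.choose k:ℝ)) :=
          Finset.sum_add_distrib
    _ = _ + 2/5 := by rw [← Finset.mul_sum, hbin, mul_one]

private lemma tisBeta_nonneg16 {p : ℝ} (h0 : 0 ≤ p) (h1 : p ≤ 1) (n : ℕ) : 0 ≤ tisBeta p n := by
  refine Finset.sum_nonneg fun k _ => mul_nonneg (Nat.cast_nonneg _) (le_min (by positivity) ?_)
  have h2 : (0:ℝ) ≤ 1 - p := by linarith
  exact mul_nonneg (mul_nonneg (mul_nonneg (by norm_num) h0) (pow_nonneg h0 _)) (pow_nonneg h2 _)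

private lemma tisBeta_le_one16 (p : ℝ) (n : ℕ) : tisBeta p n ≤ 1 := by
  have h2 : tisBeta p n ≤ ∑ k ∈ Finset.range (n+1), (n.choose k : ℝ) * (2:ℝ)⁻¹ ^ n :=
    Finset.sum_le_sum fun k _ => mul_le_mul_of_nonneg_left (min_le_left _ _) (Nat.cast_nonneg _)
  have h3 : ∑ k ∈ Finset.range (n+1), (n.choose k : ℝ) * (2:ℝ)⁻¹ ^ n
      = (2:ℝ)^n * (2:ℝ)⁻¹ ^ n := by
    rw [← Finset.sum_mul]
    congr 1
    have h4 := Nat.sum_range_choose n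
    have h5 : ((∑ k ∈ Finset.range (n+1), n.choose k : ℕ) : ℝ) = ((2^n : ℕ) : ℝ) := by rw [h4]
    push_cast at h5
    exact h5
  rw [h3, ← mul_pow] at h2
  norm_num at h2
  exact h2

private lemma dd0_16 :
    (B16 0.6 0 * Ppi16 0.6 - B16 0.6 (0+1)) 0 0 - (B16 0.6 0 * Ppi16 0.6 - B16 0.6 (0+1)) 0 1
      = (3/5 - tisBeta 0.6 0 / 2) - (2/5 - tisBeta 0.4 0 / 2) := by
  simp only [B16, Ppi16, Matrix.sub_apply, Matrix.smul_apply, smul_eq_mul, Matrix.one_mul,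
    Matrix.of_apply, Matrix.cons_val', Matrix.cons_val_zero, Matrix.cons_val_one, Matrix.head_cons,
    Matrix.empty_val', Matrix.cons_val_fin_one, Matrix.head_fin_const, h64]
  ring

private lemma ddS16 (n : ℕ) :
    (B16 0.6 (n+1) * Ppi16 0.6 - B16 0.6 (n+1+1)) 0 0
      - (B16 0.6 (n+1) * Ppi16 0.6 - B16 0.6 (n+1+1)) 0 1
      = (tisBeta 0.6 n + tisBeta 0.4 n)/10
        - (tisBeta 0.6 (n+1) - tisBeta 0.4 (n+1))/2 := by
  simp only [B16, Ppi16, Matrix.sub_apply, Matrix.smul_apply, smul_eq_mul, Matrix.mul_apply,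
    Fin.sum_univ_two, Matrix.of_apply, Matrix.cons_val', Matrix.cons_val_zero, Matrix.cons_val_one,
    Matrix.head_cons, Matrix.empty_val', Matrix.cons_val_fin_one, Matrix.head_fin_const, h64]
  ring

private lemma dd_bound16 (n : ℕ) :
    |(B16 0.6 (n+1) * Ppi16 0.6 - B16 0.6 (n+1+1)) 0 0
      - (B16 0.6 (n+1) * Ppi16 0.6 - B16 0.6 (n+1+1)) 0 1| ≤ 1/5 := by
  rw [ddS16]
  have a0 := tisBeta_nonneg16 (by norm_num : (0:ℝ) ≤ 0.6) (by norm_num) n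
  have a1 := tisBeta_le_one16 0.6 n
  have b0 := tisBeta_nonneg16 (by norm_num : (0:ℝ) ≤ 0.4) (by norm_num) n
  have b1 := tisBeta_le_one16 0.4 n
  have d0 := diff_nonneg16 (n+1)
  have d1 := diff_le16 (n+1)
  rw [abs_le]
  constructor <;> nlinarith

private lemma Db16 (t : ℕ) (i j : Fin 2) :
    |(B16 0.6 t * Ppi16 0.6 - B16 0.6 (t+1)) i j| ≤ 2 := by
  rcases t with _ | n
  · have a1 := tisBeta_le_one16 0.6 0
    have a0 := tisBeta_nonneg16 (by norm_num : (0:ℝ) ≤ 0.6) (by norm_num) 0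
    have b1 := tisBeta_le_one16 0.4 0
    have b0 := tisBeta_nonneg16 (by norm_num : (0:ℝ) ≤ 0.4) (by norm_num) 0
    fin_cases i <;> fin_cases j <;>
      simp only [B16, Ppi16, Matrix.sub_apply, Matrix.smul_apply, smul_eq_mul, Matrix.one_mul,
        Fin.mk_zero, Fin.mk_one, Fin.isValue,
        Matrix.of_apply, Matrix.cons_val', Matrix.cons_val_zero, Matrix.cons_val_one,
        Matrix.head_cons, Matrix.empty_val', Matrix.cons_val_fin_one, Matrix.head_fin_const, h64] <;>
      (rw [abs_le]; constructor <;> nlinarith)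
  · have a1 := tisBeta_le_one16 0.6 n
    have a0 := tisBeta_nonneg16 (by norm_num : (0:ℝ) ≤ 0.6) (by norm_num) n
    have b1 := tisBeta_le_one16 0.4 n
    have b0 := tisBeta_nonneg16 (by norm_num : (0:ℝ) ≤ 0.4) (by norm_num) n
    have a1' := tisBeta_le_one16 0.6 (n+1)
    have a0' := tisBeta_nonneg16 (by norm_num : (0:ℝ) ≤ 0.6) (by norm_num) (n+1)
    have b1' := tisBeta_le_one16 0.4 (n+1)
    have b0' := tisBeta_nonneg16 (by norm_num : (0:ℝ) ≤ 0.4) (by norm_num) (n+1)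
    fin_cases i <;> fin_cases j <;>
      simp only [B16, Ppi16, Matrix.sub_apply, Matrix.smul_apply, smul_eq_mul, Matrix.mul_apply,
        Fin.sum_univ_two, Fin.mk_zero, Fin.mk_one, Fin.isValue,
        Matrix.of_apply, Matrix.cons_val', Matrix.cons_val_zero, Matrix.cons_val_one,
        Matrix.head_cons, Matrix.empty_val', Matrix.cons_val_fin_one, Matrix.head_fin_const,
        h64] <;>
      (rw [abs_le]; constructor <;> nlinarith)

set_option maxRecDepth 1000000 in
set_option maxHeartbeats 4000000 in
private lemma va0 : tisBeta ((3:ℝ)/5) 0 = (1 : ℝ) := by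
  norm_num [tisBeta, Finset.sum_range_succ, min_def, Nat.choose]
set_option maxRecDepth 1000000 in
set_option maxHeartbeats 4000000 in
private lemma vb0 : tisBeta ((2:ℝ)/5) 0 = (4/5 : ℝ) := by
  norm_num [tisBeta, Finset.sum_range_succ, min_def, Nat.choose]

set_option maxRecDepth 1000000 in
set_option maxHeartbeats 4000000 in
private lemma va1 : tisBeta ((3:ℝ)/5) 1 = (49/50 : ℝ) := by
  norm_num [tisBeta, Finset.sum_range_succ, min_def, Nat.choose]
set_option maxRecDepth 1000000 in
set_option maxHeartbeats 4000000 in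
private lemma vb1 : tisBeta ((2:ℝ)/5) 1 = (4/5 : ℝ) := by
  norm_num [tisBeta, Finset.sum_range_succ, min_def, Nat.choose]

set_option maxRecDepth 1000000 in
set_option maxHeartbeats 4000000 in
private lemma va2 : tisBeta ((3:ℝ)/5) 2 = (471/500 : ℝ) := by
  norm_num [tisBeta, Finset.sum_range_succ, min_def, Nat.choose]
set_option maxRecDepth 1000000 in
set_option maxHeartbeats 4000000 in
private lemma vb2 : tisBeta ((2:ℝ)/5) 2 = (381/500 : ℝ) := by
  norm_num [tisBeta, Finset.sum_range_succ, min_def, Nat.choose]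

set_option maxRecDepth 1000000 in
set_option maxHeartbeats 4000000 in
private lemma va3 : tisBeta ((3:ℝ)/5) 3 = (1153/1250 : ℝ) := by
  norm_num [tisBeta, Finset.sum_range_succ, min_def, Nat.choose]
set_option maxRecDepth 1000000 in
set_option maxHeartbeats 4000000 in
private lemma vb3 : tisBeta ((2:ℝ)/5) 3 = (3761/5000 : ℝ) := by
  norm_num [tisBeta, Finset.sum_range_succ, min_def, Nat.choose]

set_option maxRecDepth 1000000 in
set_option maxHeartbeats 4000000 in
private lemma va4 : tisBeta ((3:ℝ)/5) 4 = (45127/50000 : ℝ) := by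
  norm_num [tisBeta, Finset.sum_range_succ, min_def, Nat.choose]
set_option maxRecDepth 1000000 in
set_option maxHeartbeats 4000000 in
private lemma vb4 : tisBeta ((2:ℝ)/5) 4 = (36617/50000 : ℝ) := by
  norm_num [tisBeta, Finset.sum_range_succ, min_def, Nat.choose]

set_option maxRecDepth 1000000 in
set_option maxHeartbeats 4000000 in
private lemma va5 : tisBeta ((3:ℝ)/5) 5 = (27529/31250 : ℝ) := by
  norm_num [tisBeta, Finset.sum_range_succ, min_def, Nat.choose]
set_option maxRecDepth 1000000 in
set_option maxHeartbeats 4000000 in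
private lemma vb5 : tisBeta ((2:ℝ)/5) 5 = (179483/250000 : ℝ) := by
  norm_num [tisBeta, Finset.sum_range_succ, min_def, Nat.choose]

set_option maxRecDepth 1000000 in
set_option maxHeartbeats 4000000 in
private lemma va6 : tisBeta ((3:ℝ)/5) 6 = (87129/100000 : ℝ) := by
  norm_num [tisBeta, Finset.sum_range_succ, min_def, Nat.choose]
set_option maxRecDepth 1000000 in
set_option maxHeartbeats 4000000 in
private lemma vb6 : tisBeta ((2:ℝ)/5) 6 = (354147/500000 : ℝ) := by
  norm_num [tisBeta, Finset.sum_range_succ, min_def, Nat.choose]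

set_option maxRecDepth 1000000 in
set_option maxHeartbeats 4000000 in
private lemma va7 : tisBeta ((3:ℝ)/5) 7 = (132461/156250 : ℝ) := by
  norm_num [tisBeta, Finset.sum_range_succ, min_def, Nat.choose]
set_option maxRecDepth 1000000 in
set_option maxHeartbeats 4000000 in
private lemma vb7 : tisBeta ((2:ℝ)/5) 7 = (6906393/10000000 : ℝ) := by
  norm_num [tisBeta, Finset.sum_range_succ, min_def, Nat.choose]

set_option maxRecDepth 1000000 in
set_option maxHeartbeats 4000000 in
private lemma va8 : tisBeta ((3:ℝ)/5) 8 = (84512323/100000000 : ℝ) := by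
  norm_num [tisBeta, Finset.sum_range_succ, min_def, Nat.choose]
set_option maxRecDepth 1000000 in
set_option maxHeartbeats 4000000 in
private lemma vb8 : tisBeta ((2:ℝ)/5) 8 = (68801213/100000000 : ℝ) := by
  norm_num [tisBeta, Finset.sum_range_succ, min_def, Nat.choose]

set_option maxRecDepth 1000000 in
set_option maxHeartbeats 4000000 in
private lemma va9 : tisBeta ((3:ℝ)/5) 9 = (3202661/3906250 : ℝ) := by
  norm_num [tisBeta, Finset.sum_range_succ, min_def, Nat.choose]
set_option maxRecDepth 1000000 in
set_option maxHeartbeats 4000000 in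
private lemma vb9 : tisBeta ((2:ℝ)/5) 9 = (1669546297/2500000000 : ℝ) := by
  norm_num [tisBeta, Finset.sum_range_succ, min_def, Nat.choose]

set_option maxRecDepth 1000000 in
set_option maxHeartbeats 4000000 in
private lemma va10 : tisBeta ((3:ℝ)/5) 10 = (20430730397/25000000000 : ℝ) := by
  norm_num [tisBeta, Finset.sum_range_succ, min_def, Nat.choose]
set_option maxRecDepth 1000000 in
set_option maxHeartbeats 4000000 in
private lemma vb10 : tisBeta ((2:ℝ)/5) 10 = (2081407871/3125000000 : ℝ) := by
  norm_num [tisBeta, Finset.sum_range_succ, min_def, Nat.choose]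

set_option maxRecDepth 1000000 in
set_option maxHeartbeats 4000000 in
private lemma va11 : tisBeta ((3:ℝ)/5) 11 = (388575313/488281250 : ℝ) := by
  norm_num [tisBeta, Finset.sum_range_succ, min_def, Nat.choose]
set_option maxRecDepth 1000000 in
set_option maxHeartbeats 4000000 in
private lemma vb11 : tisBeta ((2:ℝ)/5) 11 = (32409735317/50000000000 : ℝ) := by
  norm_num [tisBeta, Finset.sum_range_succ, min_def, Nat.choose]

set_option maxRecDepth 1000000 in
set_option maxHeartbeats 4000000 in
private lemma va12 : tisBeta ((3:ℝ)/5) 12 = (1972391905421/2500000000000 : ℝ) := by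
  norm_num [tisBeta, Finset.sum_range_succ, min_def, Nat.choose]
set_option maxRecDepth 1000000 in
set_option maxHeartbeats 4000000 in
private lemma vb12 : tisBeta ((2:ℝ)/5) 12 = (321652539293/500000000000 : ℝ) := by
  norm_num [tisBeta, Finset.sum_range_succ, min_def, Nat.choose]

set_option maxRecDepth 1000000 in
set_option maxHeartbeats 4000000 in
private lemma va13 : tisBeta ((3:ℝ)/5) 13 = (9455721961/12207031250 : ℝ) := by
  norm_num [tisBeta, Finset.sum_range_succ, min_def, Nat.choose]
set_option maxRecDepth 1000000 in
set_option maxHeartbeats 4000000 in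
private lemma vb13 : tisBeta ((2:ℝ)/5) 13 = (7887627563147/12500000000000 : ℝ) := by
  norm_num [tisBeta, Finset.sum_range_succ, min_def, Nat.choose]

set_option maxRecDepth 1000000 in
set_option maxHeartbeats 4000000 in
private lemma va14 : tisBeta ((3:ℝ)/5) 14 = (95540129310391/125000000000000 : ℝ) := by
  norm_num [tisBeta, Finset.sum_range_succ, min_def, Nat.choose]
set_option maxRecDepth 1000000 in
set_option maxHeartbeats 4000000 in
private lemma vb14 : tisBeta ((2:ℝ)/5) 14 = (311645711815133/500000000000000 : ℝ) := by
  norm_num [tisBeta, Finset.sum_range_succ, min_def, Nat.choose]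

set_option maxRecDepth 1000000 in
set_option maxHeartbeats 4000000 in
private lemma va15 : tisBeta ((3:ℝ)/5) 15 = (230628606913/305175781250 : ℝ) := by
  norm_num [tisBeta, Finset.sum_range_succ, min_def, Nat.choose]
set_option maxRecDepth 1000000 in
set_option maxHeartbeats 4000000 in
private lemma vb15 : tisBeta ((2:ℝ)/5) 15 = (3078844300992413/5000000000000000 : ℝ) := by
  norm_num [tisBeta, Finset.sum_range_succ, min_def, Nat.choose]

set_option maxRecDepth 1000000 in
set_option maxHeartbeats 4000000 in
private lemma va16 : tisBeta ((3:ℝ)/5) 16 = (7425336691220381/10000000000000000 : ℝ) := by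
  norm_num [tisBeta, Finset.sum_range_succ, min_def, Nat.choose]
set_option maxRecDepth 1000000 in
set_option maxHeartbeats 4000000 in
private lemma vb16 : tisBeta ((2:ℝ)/5) 16 = (6055098546347757/10000000000000000 : ℝ) := by
  norm_num [tisBeta, Finset.sum_range_succ, min_def, Nat.choose]

set_option maxRecDepth 1000000 in
set_option maxHeartbeats 4000000 in
private lemma va17 : tisBeta ((3:ℝ)/5) 17 = (1127203045061/1525878906250 : ℝ) := by
  norm_num [tisBeta, Finset.sum_range_succ, min_def, Nat.choose]
set_option maxRecDepth 1000000 in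
set_option maxHeartbeats 4000000 in
private lemma vb17 : tisBeta ((2:ℝ)/5) 17 = (30106164664589401/50000000000000000 : ℝ) := by
  norm_num [tisBeta, Finset.sum_range_succ, min_def, Nat.choose]

set_option maxRecDepth 1000000 in
set_option maxHeartbeats 4000000 in
private lemma va18 : tisBeta ((3:ℝ)/5) 18 = (361527653323623869/500000000000000000 : ℝ) := by
  norm_num [tisBeta, Finset.sum_range_succ, min_def, Nat.choose]
set_option maxRecDepth 1000000 in
set_option maxHeartbeats 4000000 in
private lemma vb18 : tisBeta ((2:ℝ)/5) 18 = (736985635650805803/1250000000000000000 : ℝ) := by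
  norm_num [tisBeta, Finset.sum_range_succ, min_def, Nat.choose]

set_option maxRecDepth 1000000 in
set_option maxHeartbeats 4000000 in
private lemma va19 : tisBeta ((3:ℝ)/5) 19 = (18070642487528151331/25000000000000000000 : ℝ) := by
  norm_num [tisBeta, Finset.sum_range_succ, min_def, Nat.choose]
set_option maxRecDepth 1000000 in
set_option maxHeartbeats 4000000 in
private lemma vb19 : tisBeta ((2:ℝ)/5) 19 = (3683884509408021357/6250000000000000000 : ℝ) := by
  norm_num [tisBeta, Finset.sum_range_succ, min_def, Nat.choose]

set_option maxRecDepth 1000000 in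
set_option maxHeartbeats 4000000 in
private lemma va20 : tisBeta ((3:ℝ)/5) 20 = (176374207504837885359/250000000000000000000 : ℝ) := by
  norm_num [tisBeta, Finset.sum_range_succ, min_def, Nat.choose]
set_option maxRecDepth 1000000 in
set_option maxHeartbeats 4000000 in
private lemma vb20 : tisBeta ((2:ℝ)/5) 20 = (143810838891412431411/250000000000000000000 : ℝ) := by
  norm_num [tisBeta, Finset.sum_range_succ, min_def, Nat.choose]

set_option maxRecDepth 1000000 in
set_option maxHeartbeats 4000000 in
private lemma va21 : tisBeta ((3:ℝ)/5) 21 = (175520432592388861937/250000000000000000000 : ℝ) := by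
  norm_num [tisBeta, Finset.sum_range_succ, min_def, Nat.choose]
set_option maxRecDepth 1000000 in
set_option maxHeartbeats 4000000 in
private lemma vb21 : tisBeta ((2:ℝ)/5) 21 = (286341015414151327689/500000000000000000000 : ℝ) := by
  norm_num [tisBeta, Finset.sum_range_succ, min_def, Nat.choose]

set_option maxRecDepth 1000000 in
set_option maxHeartbeats 4000000 in
private lemma va22 : tisBeta ((3:ℝ)/5) 22 = (8619574330237764775561/12500000000000000000000 : ℝ) := by
  norm_num [tisBeta, Finset.sum_range_succ, min_def, Nat.choose]
set_option maxRecDepth 1000000 in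
set_option maxHeartbeats 4000000 in
private lemma vb22 : tisBeta ((2:ℝ)/5) 22 = (2811261054347620503127/5000000000000000000000 : ℝ) := by
  norm_num [tisBeta, Finset.sum_range_succ, min_def, Nat.choose]

set_option maxRecDepth 1000000 in
set_option maxHeartbeats 4000000 in
private lemma va23 : tisBeta ((3:ℝ)/5) 23 = (170831736483143852947417/250000000000000000000000 : ℝ) := by
  norm_num [tisBeta, Finset.sum_range_succ, min_def, Nat.choose]
set_option maxRecDepth 1000000 in
set_option maxHeartbeats 4000000 in
private lemma vb23 : tisBeta ((2:ℝ)/5) 23 = (3484081123288151733451/6250000000000000000000 : ℝ) := by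
  norm_num [tisBeta, Finset.sum_range_succ, min_def, Nat.choose]

set_option maxRecDepth 1000000 in
set_option maxHeartbeats 4000000 in
private lemma va24 : tisBeta ((3:ℝ)/5) 24 = (1687590074635071778903869/2500000000000000000000000 : ℝ) := by
  norm_num [tisBeta, Finset.sum_range_succ, min_def, Nat.choose]
set_option maxRecDepth 1000000 in
set_option maxHeartbeats 4000000 in
private lemma vb24 : tisBeta ((2:ℝ)/5) 24 = (1376093972995258058282453/2500000000000000000000000 : ℝ) := by
  norm_num [tisBeta, Finset.sum_range_succ, min_def, Nat.choose]

set_option maxRecDepth 1000000 in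
set_option maxHeartbeats 4000000 in
private lemma va25 : tisBeta ((3:ℝ)/5) 25 = (8328504685672819345543341/12500000000000000000000000 : ℝ) := by
  norm_num [tisBeta, Finset.sum_range_succ, min_def, Nat.choose]
set_option maxRecDepth 1000000 in
set_option maxHeartbeats 4000000 in
private lemma vb25 : tisBeta ((2:ℝ)/5) 25 = (6794476824795723502931119/12500000000000000000000000 : ℝ) := by
  norm_num [tisBeta, Finset.sum_range_succ, min_def, Nat.choose]

set_option maxRecDepth 1000000 in
set_option maxHeartbeats 4000000 in
private lemma va26 : tisBeta ((3:ℝ)/5) 26 = (16543171047320157729542317/25000000000000000000000000 : ℝ) := by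
  norm_num [tisBeta, Finset.sum_range_succ, min_def, Nat.choose]
set_option maxRecDepth 1000000 in
set_option maxHeartbeats 4000000 in
private lemma vb26 : tisBeta ((2:ℝ)/5) 26 = (3372844485820972973991767/6250000000000000000000000 : ℝ) := by
  norm_num [tisBeta, Finset.sum_range_succ, min_def, Nat.choose]

set_option maxRecDepth 1000000 in
set_option maxHeartbeats 4000000 in
private lemma va27 : tisBeta ((3:ℝ)/5) 27 = (32535918596597631767408137/50000000000000000000000000 : ℝ) := by
  norm_num [tisBeta, Finset.sum_range_succ, min_def, Nat.choose]
set_option maxRecDepth 1000000 in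
set_option maxHeartbeats 4000000 in
private lemma vb27 : tisBeta ((2:ℝ)/5) 27 = (33178021360167046048241173/62500000000000000000000000 : ℝ) := by
  norm_num [tisBeta, Finset.sum_range_succ, min_def, Nat.choose]

set_option maxRecDepth 1000000 in
set_option maxHeartbeats 4000000 in
private lemma va28 : tisBeta ((3:ℝ)/5) 28 = (324746010517605899517142573/500000000000000000000000000 : ℝ) := by
  norm_num [tisBeta, Finset.sum_range_succ, min_def, Nat.choose]
set_option maxRecDepth 1000000 in
set_option maxHeartbeats 4000000 in
private lemma vb28 : tisBeta ((2:ℝ)/5) 28 = (1324463760797076696582912133/2500000000000000000000000000 : ℝ) := by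
  norm_num [tisBeta, Finset.sum_range_succ, min_def, Nat.choose]

set_option maxRecDepth 1000000 in
set_option maxHeartbeats 4000000 in
private lemma va29 : tisBeta ((3:ℝ)/5) 29 = (7955742560391238534898453119/12500000000000000000000000000 : ℝ) := by
  norm_num [tisBeta, Finset.sum_range_succ, min_def, Nat.choose]
set_option maxRecDepth 1000000 in
set_option maxHeartbeats 4000000 in
private lemma vb29 : tisBeta ((2:ℝ)/5) 29 = (51919650365315159668620762481/100000000000000000000000000000 : ℝ) := by
  norm_num [tisBeta, Finset.sum_range_succ, min_def, Nat.choose]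

set_option maxRecDepth 1000000 in
set_option maxHeartbeats 4000000 in
private lemma va30 : tisBeta ((3:ℝ)/5) 30 = (634927073917801202211996808973/1000000000000000000000000000000 : ℝ) := by
  norm_num [tisBeta, Finset.sum_range_succ, min_def, Nat.choose]
set_option maxRecDepth 1000000 in
set_option maxHeartbeats 4000000 in
private lemma vb30 : tisBeta ((2:ℝ)/5) 30 = (518024721189888511536888052627/1000000000000000000000000000000 : ℝ) := by
  norm_num [tisBeta, Finset.sum_range_succ, min_def, Nat.choose]

set_option maxRecDepth 1000000 in
set_option maxHeartbeats 4000000 in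
private lemma va31 : tisBeta ((3:ℝ)/5) 31 = (1246707343309760100914240248549/2000000000000000000000000000000 : ℝ) := by
  norm_num [tisBeta, Finset.sum_range_succ, min_def, Nat.choose]
set_option maxRecDepth 1000000 in
set_option maxHeartbeats 4000000 in
private lemma vb31 : tisBeta ((2:ℝ)/5) 31 = (6356171050402359243793252433/12500000000000000000000000000 : ℝ) := by
  norm_num [tisBeta, Finset.sum_range_succ, min_def, Nat.choose]

set_option maxRecDepth 1000000 in
set_option maxHeartbeats 4000000 in
private lemma va32 : tisBeta ((3:ℝ)/5) 32 = (12388938476536534902592149373849/20000000000000000000000000000000 : ℝ) := by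
  norm_num [tisBeta, Finset.sum_range_succ, min_def, Nat.choose]
set_option maxRecDepth 1000000 in
set_option maxHeartbeats 4000000 in
private lemma vb32 : tisBeta ((2:ℝ)/5) 32 = (10109102047762945596085673694857/20000000000000000000000000000000 : ℝ) := by
  norm_num [tisBeta, Finset.sum_range_succ, min_def, Nat.choose]

set_option maxRecDepth 1000000 in
set_option maxHeartbeats 4000000 in
private lemma va33 : tisBeta ((3:ℝ)/5) 33 = (305637901272006594724900115168737/500000000000000000000000000000000 : ℝ) := by
  norm_num [tisBeta, Finset.sum_range_succ, min_def, Nat.choose]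
set_option maxRecDepth 1000000 in
set_option maxHeartbeats 4000000 in
private lemma vb33 : tisBeta ((2:ℝ)/5) 33 = (49864583465246931673777765278037/100000000000000000000000000000000 : ℝ) := by
  norm_num [tisBeta, Finset.sum_range_succ, min_def, Nat.choose]

set_option maxRecDepth 1000000 in
set_option maxHeartbeats 4000000 in
private lemma va34 : tisBeta ((3:ℝ)/5) 34 = (1512984615476453731643885135223641/2500000000000000000000000000000000 : ℝ) := by
  norm_num [tisBeta, Finset.sum_range_succ, min_def, Nat.choose]
set_option maxRecDepth 1000000 in
set_option maxHeartbeats 4000000 in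
private lemma vb34 : tisBeta ((2:ℝ)/5) 34 = (246922145081458988582475862081757/500000000000000000000000000000000 : ℝ) := by
  norm_num [tisBeta, Finset.sum_range_succ, min_def, Nat.choose]

set_option maxRecDepth 1000000 in
set_option maxHeartbeats 4000000 in
private lemma va35 : tisBeta ((3:ℝ)/5) 35 = (30005979829141341637936161332862067/50000000000000000000000000000000000 : ℝ) := by
  norm_num [tisBeta, Finset.sum_range_succ, min_def, Nat.choose]
set_option maxRecDepth 1000000 in
set_option maxHeartbeats 4000000 in
private lemma vb35 : tisBeta ((2:ℝ)/5) 35 = (6119640473270636189311045736967977/12500000000000000000000000000000000 : ℝ) := by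
  norm_num [tisBeta, Finset.sum_range_succ, min_def, Nat.choose]

set_option maxRecDepth 1000000 in
set_option maxHeartbeats 4000000 in
private lemma va36 : tisBeta ((3:ℝ)/5) 36 = (11840851379274340819045095371516779/20000000000000000000000000000000000 : ℝ) := by
  norm_num [tisBeta, Finset.sum_range_succ, min_def, Nat.choose]
set_option maxRecDepth 1000000 in
set_option maxHeartbeats 4000000 in
private lemma vb36 : tisBeta ((2:ℝ)/5) 36 = (60388701970795382712463611561539531/125000000000000000000000000000000000 : ℝ) := by
  norm_num [tisBeta, Finset.sum_range_succ, min_def, Nat.choose]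

set_option maxRecDepth 1000000 in
set_option maxHeartbeats 4000000 in
private lemma va37 : tisBeta ((3:ℝ)/5) 37 = (294897070531383188378692514349606361/500000000000000000000000000000000000 : ℝ) := by
  norm_num [tisBeta, Finset.sum_range_succ, min_def, Nat.choose]
set_option maxRecDepth 1000000 in
set_option maxHeartbeats 4000000 in
private lemma vb37 : tisBeta ((2:ℝ)/5) 37 = (2405992260252774985670348067985919771/5000000000000000000000000000000000000 : ℝ) := by
  norm_num [tisBeta, Finset.sum_range_succ, min_def, Nat.choose]

set_option maxRecDepth 1000000 in
set_option maxHeartbeats 4000000 in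
private lemma va38 : tisBeta ((3:ℝ)/5) 38 = (28994264942613896840263059892671197161/50000000000000000000000000000000000000 : ℝ) := by
  norm_num [tisBeta, Finset.sum_range_succ, min_def, Nat.choose]
set_option maxRecDepth 1000000 in
set_option maxHeartbeats 4000000 in
private lemma vb38 : tisBeta ((2:ℝ)/5) 38 = (23658850417817503477688944669434413807/50000000000000000000000000000000000000 : ℝ) := by
  norm_num [tisBeta, Finset.sum_range_succ, min_def, Nat.choose]

set_option maxRecDepth 1000000 in
set_option maxHeartbeats 4000000 in
private lemma va39 : tisBeta ((3:ℝ)/5) 39 = (36224852892218294463310366489206161351/62500000000000000000000000000000000000 : ℝ) := by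
  norm_num [tisBeta, Finset.sum_range_succ, min_def, Nat.choose]
set_option maxRecDepth 1000000 in
set_option maxHeartbeats 4000000 in
private lemma vb39 : tisBeta ((2:ℝ)/5) 39 = (236477365682598924966229885820613884723/500000000000000000000000000000000000000 : ℝ) := by
  norm_num [tisBeta, Finset.sum_range_succ, min_def, Nat.choose]

set_option maxRecDepth 1000000 in
set_option maxHeartbeats 4000000 in
private lemma va40 : tisBeta ((3:ℝ)/5) 40 = (2843142662060567381842668092021395649131/5000000000000000000000000000000000000000 : ℝ) := by
  norm_num [tisBeta, Finset.sum_range_succ, min_def, Nat.choose]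
set_option maxRecDepth 1000000 in
set_option maxHeartbeats 4000000 in
private lemma vb40 : tisBeta ((2:ℝ)/5) 40 = (2319900009203074197207803308748331998999/5000000000000000000000000000000000000000 : ℝ) := by
  norm_num [tisBeta, Finset.sum_range_succ, min_def, Nat.choose]

set_option maxRecDepth 1000000 in
set_option maxHeartbeats 4000000 in
private lemma va41 : tisBeta ((3:ℝ)/5) 41 = (2831470975140128109029620895118819010753/5000000000000000000000000000000000000000 : ℝ) := by
  norm_num [tisBeta, Finset.sum_range_succ, min_def, Nat.choose]
set_option maxRecDepth 1000000 in
set_option maxHeartbeats 4000000 in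
private lemma vb41 : tisBeta ((2:ℝ)/5) 41 = (2310765645526208679354114198128924195051/5000000000000000000000000000000000000000 : ℝ) := by
  norm_num [tisBeta, Finset.sum_range_succ, min_def, Nat.choose]

set_option maxRecDepth 1000000 in
set_option maxHeartbeats 4000000 in
private lemma va42 : tisBeta ((3:ℝ)/5) 42 = (872172777387003010249139883991123548401/1562500000000000000000000000000000000000 : ℝ) := by
  norm_num [tisBeta, Finset.sum_range_succ, min_def, Nat.choose]
set_option maxRecDepth 1000000 in
set_option maxHeartbeats 4000000 in
private lemma vb42 : tisBeta ((2:ℝ)/5) 42 = (5693235454844581367035818966996522502679/12500000000000000000000000000000000000000 : ℝ) := by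
  norm_num [tisBeta, Finset.sum_range_succ, min_def, Nat.choose]

set_option maxRecDepth 1000000 in
set_option maxHeartbeats 4000000 in
private lemma va43 : tisBeta ((3:ℝ)/5) 43 = (69243905895437582768525952242494715729947/125000000000000000000000000000000000000000 : ℝ) := by
  norm_num [tisBeta, Finset.sum_range_succ, min_def, Nat.choose]
set_option maxRecDepth 1000000 in
set_option maxHeartbeats 4000000 in
private lemma vb43 : tisBeta ((2:ℝ)/5) 43 = (452102699849256341703965673673352401980811/1000000000000000000000000000000000000000000 : ℝ) := by
  norm_num [tisBeta, Finset.sum_range_succ, min_def, Nat.choose]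

set_option maxRecDepth 1000000 in
set_option maxHeartbeats 4000000 in
private lemma va44 : tisBeta ((3:ℝ)/5) 44 = (13712490044951287441055471965994426848925339/25000000000000000000000000000000000000000000 : ℝ) := by
  norm_num [tisBeta, Finset.sum_range_succ, min_def, Nat.choose]
set_option maxRecDepth 1000000 in
set_option maxHeartbeats 4000000 in
private lemma vb44 : tisBeta ((2:ℝ)/5) 44 = (4475596620447153712823083909232018587453423/10000000000000000000000000000000000000000000 : ℝ) := by
  norm_num [tisBeta, Finset.sum_range_succ, min_def, Nat.choose]

set_option maxRecDepth 1000000 in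
set_option maxHeartbeats 4000000 in
private lemma va45 : tisBeta ((3:ℝ)/5) 45 = (271243562662704069491580360222130831910316133/500000000000000000000000000000000000000000000 : ℝ) := by
  norm_num [tisBeta, Finset.sum_range_succ, min_def, Nat.choose]
set_option maxRecDepth 1000000 in
set_option maxHeartbeats 4000000 in
private lemma vb45 : tisBeta ((2:ℝ)/5) 45 = (553437101083250855443827330458486913295296581/1250000000000000000000000000000000000000000000 : ℝ) := by
  norm_num [tisBeta, Finset.sum_range_succ, min_def, Nat.choose]

set_option maxRecDepth 1000000 in
set_option maxHeartbeats 4000000 in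
private lemma va46 : tisBeta ((3:ℝ)/5) 46 = (539492077496693086583967744893158739513557769/1000000000000000000000000000000000000000000000 : ℝ) := by
  norm_num [tisBeta, Finset.sum_range_succ, min_def, Nat.choose]
set_option maxRecDepth 1000000 in
set_option maxHeartbeats 4000000 in
private lemma vb46 : tisBeta ((2:ℝ)/5) 46 = (11005846017262001008493494122596576855457367183/25000000000000000000000000000000000000000000000 : ℝ) := by
  norm_num [tisBeta, Finset.sum_range_succ, min_def, Nat.choose]

set_option maxRecDepth 1000000 in
set_option maxHeartbeats 4000000 in
private lemma va47 : tisBeta ((3:ℝ)/5) 47 = (8309829499285668769867437749739783513745882403/15625000000000000000000000000000000000000000000 : ℝ) := by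
  norm_num [tisBeta, Finset.sum_range_succ, min_def, Nat.choose]
set_option maxRecDepth 1000000 in
set_option maxHeartbeats 4000000 in
private lemma vb47 : tisBeta ((2:ℝ)/5) 47 = (108511125745787164012228342119176686945821294913/250000000000000000000000000000000000000000000000 : ℝ) := by
  norm_num [tisBeta, Finset.sum_range_succ, min_def, Nat.choose]

set_option maxRecDepth 1000000 in
set_option maxHeartbeats 4000000 in
private lemma va48 : tisBeta ((3:ℝ)/5) 48 = (1327778822567965275300617474133847523104318410317/2500000000000000000000000000000000000000000000000 : ℝ) := by
  norm_num [tisBeta, Finset.sum_range_succ, min_def, Nat.choose]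
set_option maxRecDepth 1000000 in
set_option maxHeartbeats 4000000 in
private lemma vb48 : tisBeta ((2:ℝ)/5) 48 = (1083593344342859408840752788571021005608578294069/2500000000000000000000000000000000000000000000000 : ℝ) := by
  norm_num [tisBeta, Finset.sum_range_succ, min_def, Nat.choose]

set_option maxRecDepth 1000000 in
set_option maxHeartbeats 4000000 in
private lemma va49 : tisBeta ((3:ℝ)/5) 49 = (6523900984671017554714596564144132773486102222533/12500000000000000000000000000000000000000000000000 : ℝ) := by
  norm_num [tisBeta, Finset.sum_range_succ, min_def, Nat.choose]
set_option maxRecDepth 1000000 in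
set_option maxHeartbeats 4000000 in
private lemma vb49 : tisBeta ((2:ℝ)/5) 49 = (5324268617280452819042771433834649230828788646673/12500000000000000000000000000000000000000000000000 : ℝ) := by
  norm_num [tisBeta, Finset.sum_range_succ, min_def, Nat.choose]

set_option maxRecDepth 1000000 in
set_option maxHeartbeats 4000000 in
private lemma va50 : tisBeta ((3:ℝ)/5) 50 = (32545210920239861990621473889580831963414643310743/62500000000000000000000000000000000000000000000000 : ℝ) := by
  norm_num [tisBeta, Finset.sum_range_succ, min_def, Nat.choose]
set_option maxRecDepth 1000000 in
set_option maxHeartbeats 4000000 in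
private lemma vb50 : tisBeta ((2:ℝ)/5) 50 = (3320371153351466193933280376123993707266434459339/7812500000000000000000000000000000000000000000000 : ℝ) := by
  norm_num [tisBeta, Finset.sum_range_succ, min_def, Nat.choose]

set_option maxRecDepth 1000000 in
set_option maxHeartbeats 4000000 in
private lemma va51 : tisBeta ((3:ℝ)/5) 51 = (32042355603985011535887636609005775736334351143413/62500000000000000000000000000000000000000000000000 : ℝ) := by
  norm_num [tisBeta, Finset.sum_range_succ, min_def, Nat.choose]
set_option maxRecDepth 1000000 in
set_option maxHeartbeats 4000000 in
private lemma vb51 : tisBeta ((2:ℝ)/5) 51 = (52299819005490490498726896199896306943202471360239/125000000000000000000000000000000000000000000000000 : ℝ) := by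
  norm_num [tisBeta, Finset.sum_range_succ, min_def, Nat.choose]

set_option maxRecDepth 1000000 in
set_option maxHeartbeats 4000000 in
private lemma va52 : tisBeta ((3:ℝ)/5) 52 = (127450044521655315197599096465008037715469968923353/250000000000000000000000000000000000000000000000000 : ℝ) := by
  norm_num [tisBeta, Finset.sum_range_succ, min_def, Nat.choose]
set_option maxRecDepth 1000000 in
set_option maxHeartbeats 4000000 in
private lemma vb52 : tisBeta ((2:ℝ)/5) 52 = (20805819384482066463236390553521650361508912544393/50000000000000000000000000000000000000000000000000 : ℝ) := by
  norm_num [tisBeta, Finset.sum_range_succ, min_def, Nat.choose]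

set_option maxRecDepth 1000000 in
set_option maxHeartbeats 4000000 in
private lemma va53 : tisBeta ((3:ℝ)/5) 53 = (2520366473243867199814101629934439153300326484671709/5000000000000000000000000000000000000000000000000000 : ℝ) := by
  norm_num [tisBeta, Finset.sum_range_succ, min_def, Nat.choose]
set_option maxRecDepth 1000000 in
set_option maxHeartbeats 4000000 in
private lemma vb53 : tisBeta ((2:ℝ)/5) 53 = (514221122434967709000658667417547134691018076962511/1250000000000000000000000000000000000000000000000000 : ℝ) := by
  norm_num [tisBeta, Finset.sum_range_succ, min_def, Nat.choose]

set_option maxRecDepth 1000000 in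
set_option maxHeartbeats 4000000 in
private lemma va54 : tisBeta ((3:ℝ)/5) 54 = (24980418601312759283075045741872769316200937432864893/50000000000000000000000000000000000000000000000000000 : ℝ) := by
  norm_num [tisBeta, Finset.sum_range_succ, min_def, Nat.choose]
set_option maxRecDepth 1000000 in
set_option maxHeartbeats 4000000 in
private lemma vb54 : tisBeta ((2:ℝ)/5) 54 = (25487809990622472734966962813405734517748576434273353/62500000000000000000000000000000000000000000000000000 : ℝ) := by
  norm_num [tisBeta, Finset.sum_range_succ, min_def, Nat.choose]

set_option maxRecDepth 1000000 in
set_option maxHeartbeats 4000000 in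
private lemma va55 : tisBeta ((3:ℝ)/5) 55 = (775080190779951024970841048215018247811249606368608291/1562500000000000000000000000000000000000000000000000000 : ℝ) := by
  norm_num [tisBeta, Finset.sum_range_succ, min_def, Nat.choose]
set_option maxRecDepth 1000000 in
set_option maxHeartbeats 4000000 in
private lemma vb55 : tisBeta ((2:ℝ)/5) 55 = (1012101878943468639231673004244888322949903472826374633/2500000000000000000000000000000000000000000000000000000 : ℝ) := by
  norm_num [tisBeta, Finset.sum_range_succ, min_def, Nat.choose]

/-- Off-policy Truncated IS can produce a non-contraction: with `p = 0.6`
and `γ = 0.94`, the series defining `Z` converges entrywise absolutely and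
`‖Z‖ > 1` in the maximum absolute row-sum norm. -/
theorem stmt16 :
    (∀ i j : Fin 2,
      Summable fun t : ℕ =>
        |(0.94 : ℝ) ^ (t + 1) *
          ((B16 0.6 t * Ppi16 0.6 - B16 0.6 (t + 1)) i j)|) ∧
    1 < rowNorm2 (Z16 0.6 0.94) := by
  have hgeo : Summable fun t : ℕ => (0.94:ℝ)^t :=
    summable_geometric_of_lt_one (by norm_num) (by norm_num)
  have hgeo2 : Summable fun t : ℕ => 2 * (0.94:ℝ)^(t+1) :=
    (hgeo.mul_left (2 * 0.94)).congr fun t => by ring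
  have habs : ∀ i j : Fin 2, Summable fun t : ℕ =>
      |(0.94 : ℝ) ^ (t + 1) * ((B16 0.6 t * Ppi16 0.6 - B16 0.6 (t + 1)) i j)| := by
    intro i j
    refine Summable.of_nonneg_of_le (fun t => abs_nonneg _) (fun t => ?_) hgeo2
    rw [abs_mul, abs_pow, show |(0.94:ℝ)| = 0.94 by rw [abs_of_pos]; norm_num]
    calc (0.94:ℝ)^(t+1) * |(B16 0.6 t * Ppi16 0.6 - B16 0.6 (t+1)) i j|
        ≤ (0.94:ℝ)^(t+1) * 2 := mul_le_mul_of_nonneg_left (Db16 t i j) (by positivity)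
      _ = 2 * 0.94^(t+1) := by ring
  refine ⟨habs, ?_⟩
  set H : ℕ → ℝ := fun t => (0.94:ℝ)^(t+1) *
    ((B16 0.6 t * Ppi16 0.6 - B16 0.6 (t+1)) 0 0 - (B16 0.6 t * Ppi16 0.6 - B16 0.6 (t+1)) 0 1)
    with hH
  have hsF : Summable fun t : ℕ =>
      (0.94:ℝ)^(t+1) * ((B16 0.6 t * Ppi16 0.6 - B16 0.6 (t+1)) 0 0) := (habs 0 0).of_abs
  have hsG : Summable fun t : ℕ =>
      (0.94:ℝ)^(t+1) * ((B16 0.6 t * Ppi16 0.6 - B16 0.6 (t+1)) 0 1) := (habs 0 1).of_abs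
  have hsH : Summable H := (hsF.sub hsG).congr fun t => by rw [hH]; ring
  have hz : Z16 0.6 0.94 0 0 - Z16 0.6 0.94 0 1 = ∑' t, H t := by
    simp only [Z16]
    rw [← Summable.tsum_sub hsF hsG]
    exact (tsum_congr fun t => by rw [hH]; ring).symm
  have hbound : ∀ t : ℕ, |H (t + 56)| ≤ (1/5) * (0.94:ℝ)^57 * 0.94^t := by
    intro t
    have e : t + 56 = (t + 55) + 1 := by omega
    rw [hH]
    simp only []
    rw [e]
    rw [abs_mul, abs_pow, show |(0.94:ℝ)| = 0.94 by rw [abs_of_pos]; norm_num]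
    have h2 := dd_bound16 (t+55)
    have h4 := mul_le_mul_of_nonneg_left h2
      (show (0:ℝ) ≤ 0.94^((t+55)+1+1) by positivity)
    refine le_trans h4 (le_of_eq ?_)
    rw [show (t+55)+1+1 = 57+t from by omega, pow_add]
    ring
  have hsTail : Summable fun t : ℕ => H (t + 56) := (summable_nat_add_iff 56).2 hsH
  have hsTailAbs : Summable fun t : ℕ => |H (t + 56)| := hsTail.abs
  have hsMaj : Summable fun t : ℕ => (1/5) * (0.94:ℝ)^57 * 0.94^t := hgeo.mul_left _
  have htail1 : ∑' t : ℕ, |H (t + 56)| ≤ (1/5) * (0.94:ℝ)^57 * (1 - 0.94)⁻¹ := by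
    have h := Summable.tsum_le_tsum hbound hsTailAbs hsMaj
    rwa [tsum_mul_left, tsum_geometric_of_lt_one (by norm_num) (by norm_num)] at h
  have htail2 : -((1/5) * (0.94:ℝ)^57 * (1 - 0.94)⁻¹) ≤ ∑' t : ℕ, H (t + 56) := by
    have h5 : ∑' t : ℕ, -|H (t + 56)| ≤ ∑' t : ℕ, H (t + 56) :=
      Summable.tsum_le_tsum (fun t => neg_abs_le _) hsTailAbs.neg hsTail
    rw [tsum_neg] at h5
    linarith
  have hexp := Summable.sum_add_tsum_nat_add 56 hsH
  have hpart : ∑ t ∈ Finset.range 56, H t = (3888246429985016593628524125032154264417995214029269342481901687823029798129766427797716307075191678517884146970724292554791239537179895967114534508547/3469446951953614188823848962783813476562500000000000000000000000000000000000000000000000000000000000000000000000000000000000000000000000000000000000000 : ℝ) := by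
    rw [hH]
    rw [Finset.sum_range_succ']
    simp only [Finset.sum_range_succ, Finset.sum_range_zero, ddS16, dd0_16]
    norm_num [va0, va1, va2, va3, va4, va5, va6, va7, va8, va9, va10, va11, va12, va13, va14, va15, va16, va17, va18, va19, va20, va21, va22, va23, va24, va25, va26, va27, va28, va29, va30, va31, va32, va33, va34, va35, va36, va37, va38, va39, va40, va41, va42, va43, va44, va45, va46, va47, va48, va49, va50, va51, va52, va53, va54, va55, vb0, vb1, vb2, vb3, vb4, vb5, vb6, vb7, vb8, vb9, vb10, vb11, vb12, vb13, vb14, vb15, vb16, vb17, vb18, vb19, vb20, vb21, vb22, vb23, vb24, vb25, vb26, vb27, vb28, vb29, vb30, vb31, vb32, vb33, vb34, vb35, vb36, vb37, vb38, vb39, vb40, vb41, vb42, vb43, vb44, vb45, vb46, vb47, vb48, vb49, vb50, vb51, vb52, vb53, vb54, vb55]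
  have hnum : (1:ℝ) + (1/5) * (0.94:ℝ)^57 * (1 - 0.94)⁻¹ < (3888246429985016593628524125032154264417995214029269342481901687823029798129766427797716307075191678517884146970724292554791239537179895967114534508547/3469446951953614188823848962783813476562500000000000000000000000000000000000000000000000000000000000000000000000000000000000000000000000000000000000000 : ℝ) := by norm_num
  have hZ : 1 < Z16 0.6 0.94 0 0 - Z16 0.6 0.94 0 1 := by
    rw [hz, ← hexp, hpart]
    linarith
  have habs1 : Z16 0.6 0.94 0 0 - Z16 0.6 0.94 0 1
      ≤ |Z16 0.6 0.94 0 0| + |Z16 0.6 0.94 0 1| := by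
    have h6 := le_abs_self (Z16 0.6 0.94 0 0)
    have h7 := neg_abs_le (Z16 0.6 0.94 0 1)
    linarith
  have h8 : 1 < |Z16 0.6 0.94 0 0| + |Z16 0.6 0.94 0 1| := lt_of_lt_of_le hZ habs1
  unfold rowNorm2
  exact lt_max_of_lt_left h8
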